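/- Let B be a finite set with a measure m : B → ℝ₊, V_B = Σ_{x∈B} m_x, m₀ = min_{x∈B} m_x, and |B| ≥ 2. Let f : B → ℝ satisfy Σ_{x∈B} f(x) m_x = 0 and Σ_{x∈B} f(x)² m_x = 1. Then max_{x∈B} |f(x)| ≥ 1/√V_B, and moreover max_{x∈B} f(x) − min_{x∈B} f(x) ≥ √V_B / (V_B − m₀). -/

import Mathlib

open Finset

variable {V : Type*}

/-- The Dirichlet energy `⟨du,du⟩ = ∑_{{x,y}∈E} (u y - u x)^2 w_{xy}` of a function `u`,
where the edge weight `w` is symmetric and vanishes on non-adjacent pairs. -/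
noncomputable def energy [Fintype V] (w : V → V → ℝ) (u : V → ℝ) : ℝ :=
  (1 / 2) * ∑ x, ∑ y, (u y - u x) ^ 2 * w x y

/-- The Dirichlet pairing `⟨du,dv⟩ = ∑_{{x,y}∈E} (u y - u x)(v y - v x) w_{xy}`. -/
noncomputable def dirPairing [Fintype V] (w : V → V → ℝ) (u v : V → ℝ) : ℝ :=
  (1 / 2) * ∑ x, ∑ y, (u y - u x) * (v y - v x) * w x y

/-- The weighted graph Laplacian `Δu(x) = (1/m_x) ∑_y (u y - u x) w_{xy}`. -/
noncomputable def glap [Fintype V] (m : V → ℝ) (w : V → V → ℝ) (u : V → ℝ) (x : V) : ℝ :=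
  (1 / m x) * ∑ y, (u y - u x) * w x y

/-- `d_B`, the maximal graph distance between two boundary vertices. -/
noncomputable def boundaryDiam (G : SimpleGraph V) (B : Finset V) : ℕ :=
  (B ×ˢ B).sup fun p => G.dist p.1 p.2

/-- `w₀`, the minimal edge weight. -/
noncomputable def minEdgeWeight (G : SimpleGraph V) (w : V → V → ℝ) : ℝ :=
  sInf {r : ℝ | ∃ x y, G.Adj x y ∧ w x y = r}

/-- `m₀`, the minimal vertex measure on the boundary. -/
noncomputable def minBoundaryMeasure (B : Finset V) (m : V → ℝ) : ℝ :=
  sInf {r : ℝ | ∃ x ∈ B, m x = r}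

/-- The second Steklov eigenvalue `σ₂`, via its variational characterization: the infimum of
the Rayleigh quotients `E(u)/⟨u,u⟩_B` over functions `u` on `V` whose boundary values are
nonzero and have weighted mean zero.  (Since the harmonic extension minimizes the Dirichlet
energy among all extensions of given boundary data, this agrees with the second eigenvalue of
the Steklov operator.) -/
noncomputable def sigma2 [Fintype V] (B : Finset V) (m : V → ℝ) (w : V → V → ℝ) : ℝ :=
  sInf {r : ℝ | ∃ u : V → ℝ, (∃ x ∈ B, u x ≠ 0) ∧ (∑ x ∈ B, u x * m x = 0) ∧
    r = energy w u / ∑ x ∈ B, (u x) ^ 2 * m x}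

/-- **The key estimates on normalized mean-zero boundary data.**
Let `B` be a finite set with positive measure `m`, `|B| ≥ 2`, `V_B = ∑_{x∈B} m_x`,
`m₀ = min_{x∈B} m_x`.  If `f` satisfies `∑_{x∈B} f(x) m_x = 0` and `∑_{x∈B} f(x)² m_x = 1`,
then `max_{x∈B} |f(x)| ≥ 1/√V_B` and `max_{x∈B} f(x) - min_{x∈B} f(x) ≥ √V_B/(V_B - m₀)`. -/
theorem normalized_mean_zero_estimates {V : Type*}
    (B : Finset V) (hB : 2 ≤ B.card) (hne : B.Nonempty)
    (m : V → ℝ) (hm : ∀ x ∈ B, 0 < m x)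
    (f : V → ℝ)
    (hmean : ∑ x ∈ B, f x * m x = 0)
    (hnorm : ∑ x ∈ B, f x ^ 2 * m x = 1) :
    1 / Real.sqrt (∑ x ∈ B, m x) ≤ B.sup' hne (fun x => |f x|) ∧
    Real.sqrt (∑ x ∈ B, m x) / ((∑ x ∈ B, m x) - B.inf' hne m)
      ≤ B.sup' hne f - B.inf' hne f := by
  classical
  set Vb := ∑ x ∈ B, m x with hVbdef
  have hVb : 0 < Vb := Finset.sum_pos hm hne
  obtain ⟨z, hzB, hza⟩ := B.exists_mem_eq_sup' hne (fun x => |f x|)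
  set a := B.sup' hne (fun x => |f x|) with hadef
  have hfa : ∀ x ∈ B, |f x| ≤ a := fun x hx => Finset.le_sup' (fun x => |f x|) hx
  have ha0 : 0 ≤ a := by rw [hza]; exact abs_nonneg _
  have h1 : (1:ℝ) ≤ a ^ 2 * Vb := by
    calc (1:ℝ) = ∑ x ∈ B, f x ^ 2 * m x := hnorm.symm
    _ ≤ ∑ x ∈ B, a ^ 2 * m x := by
        apply Finset.sum_le_sum
        intro x hx
        have h2 : f x ^ 2 ≤ a ^ 2 := by
          rw [← sq_abs (f x)]
          exact pow_le_pow_left₀ (abs_nonneg _) (hfa x hx) 2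
        exact mul_le_mul_of_nonneg_right h2 (hm x hx).le
    _ = a ^ 2 * Vb := by rw [← Finset.mul_sum]
  have hsq : 1 / Vb ≤ a ^ 2 := (div_le_iff₀ hVb).mpr h1
  have hpart1 : 1 / Real.sqrt Vb ≤ a := by
    rw [one_div, ← Real.sqrt_inv]
    calc Real.sqrt Vb⁻¹ ≤ Real.sqrt (a ^ 2) :=
          Real.sqrt_le_sqrt (by rwa [one_div] at hsq)
    _ = a := Real.sqrt_sq ha0
  refine ⟨hpart1, ?_⟩
  set M := B.sup' hne f with hMdef
  set L := B.inf' hne f with hLdef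
  have hLle : ∀ x ∈ B, L ≤ f x := fun x hx => Finset.inf'_le _ hx
  have hMle : ∀ x ∈ B, f x ≤ M := fun x hx => Finset.le_sup' _ hx
  have hML : 0 ≤ M - L := by
    have := hLle z hzB; have := hMle z hzB; linarith
  have hm0z : B.inf' hne m ≤ m z := Finset.inf'_le _ hzB
  obtain ⟨y, hyB, hyz⟩ : ∃ y ∈ B, y ≠ z :=
    Finset.exists_mem_ne (by omega) z
  have hrest_eq : ∑ x ∈ B.erase z, m x = Vb - m z := by
    rw [hVbdef, ← Finset.add_sum_erase B m hzB]; ring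
  have hrest : 0 < Vb - m z := by
    rw [← hrest_eq]
    exact Finset.sum_pos (fun x hx => hm x (Finset.mem_of_mem_erase hx))
      ⟨y, Finset.mem_erase.mpr ⟨hyz, hyB⟩⟩
  have hsplit : f z * m z + ∑ x ∈ B.erase z, f x * m x = 0 := by
    rw [Finset.add_sum_erase B (fun x => f x * m x) hzB]; exact hmean
  have hkey : a * Vb ≤ (M - L) * (Vb - m z) := by
    rcases abs_cases (f z) with ⟨h1', h2'⟩ | ⟨h1', h2'⟩
    · have haz : a = f z := by rw [hza, h1']
      have hlow : L * (Vb - m z) ≤ ∑ x ∈ B.erase z, f x * m x := by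
        rw [← hrest_eq, Finset.mul_sum]
        refine Finset.sum_le_sum fun x hx => ?_
        exact mul_le_mul_of_nonneg_right (hLle x (Finset.mem_of_mem_erase hx))
          (hm x (Finset.mem_of_mem_erase hx)).le
      have hMz := hMle z hzB
      nlinarith [hrest, hm z hzB]
    · have haz : a = -(f z) := by rw [hza, h1']
      have hup : ∑ x ∈ B.erase z, f x * m x ≤ M * (Vb - m z) := by
        rw [← hrest_eq, Finset.mul_sum]
        refine Finset.sum_le_sum fun x hx => ?_
        exact mul_le_mul_of_nonneg_right (hMle x (Finset.mem_of_mem_erase hx))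
          (hm x (Finset.mem_of_mem_erase hx)).le
      have hLz := hLle z hzB
      nlinarith [hrest, hm z hzB]
  have hm0le : Vb - m z ≤ Vb - B.inf' hne m := by linarith
  have hVm0 : 0 < Vb - B.inf' hne m := lt_of_lt_of_le hrest hm0le
  rw [div_le_iff₀ hVm0]
  have hsV : Real.sqrt Vb ≤ a * Vb := by
    have heq : Real.sqrt Vb = (1 / Real.sqrt Vb) * Vb := by
      rw [one_div, inv_mul_eq_div, eq_div_iff (Real.sqrt_pos.mpr hVb).ne',
        Real.mul_self_sqrt hVb.le]
    rw [heq]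
    exact mul_le_mul_of_nonneg_right hpart1 hVb.le
  calc Real.sqrt Vb ≤ a * Vb := hsV
  _ ≤ (M - L) * (Vb - m z) := hkey
  _ ≤ (M - L) * (Vb - B.inf' hne m) := mul_le_mul_of_nonneg_left hm0le hML
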